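/- Let G be a strongly regular graph with parameters (19, 6, 1, 2), let {a, b, c} be a triangle in G, and let A, B, C be the sets of neighbors of a, b, c respectively excluding the triangle vertices. Then the induced subgraph of G on A ∪ B ∪ C is 3-regular: every vertex of A ∪ B ∪ C has exactly 3 neighbors within A ∪ B ∪ C. -/
import Mathlib

open Finset

section helpers

variable {V : Type} [Fintype V] [DecidableEq V] (G : SimpleGraph V) [DecidableRel G.Adj]

/-- If `a,b` are adjacent, they cannot have two distinct common neighbors `v,c`. -/
lemma srg_no_two_common (h : G.IsSRGWith 19 6 1 2) {a b v c : V}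
    (hab : G.Adj a b) (hav : G.Adj a v) (hbv : G.Adj b v)
    (hac : G.Adj a c) (hbc : G.Adj b c) (hvc : v ≠ c) : False := by
  have h1 := h.of_adj a b hab
  have hsub : ({v, c} : Finset V) ⊆ (G.commonNeighbors a b).toFinset := by
    intro u hu
    simp only [mem_insert, mem_singleton] at hu
    rcases hu with rfl | rfl <;>
      simp [Set.mem_toFinset, SimpleGraph.mem_commonNeighbors, hav, hbv, hac, hbc]
  have hcard2 : ({v, c} : Finset V).card = 2 := by
    rw [card_insert_of_notMem (by simpa using hvc), card_singleton]
  have := card_le_card hsub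
  rw [hcard2, Set.toFinset_card, h1] at this
  omega

/-- A vertex `v ∈ A` has exactly one neighbor in `A`. -/
lemma srg_same_set (h : G.IsSRGWith 19 6 1 2) {a b c v : V} {X : Finset V}
    (hX : ∀ u, u ∈ X ↔ G.Adj a u ∧ u ≠ b ∧ u ≠ c)
    (hab : G.Adj a b) (hac : G.Adj a c) (hbc : G.Adj b c)
    (hav : G.Adj a v) (hvb : v ≠ b) (hvc : v ≠ c) :
    (X.filter (fun u => G.Adj v u)).card = 1 := by
  have hkey : X.filter (fun u => G.Adj v u) = (G.commonNeighbors v a).toFinset := by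
    ext u
    simp only [mem_filter, hX, Set.mem_toFinset, SimpleGraph.mem_commonNeighbors]
    constructor
    · rintro ⟨⟨hau, _, _⟩, hvu⟩; exact ⟨hvu, hau⟩
    · rintro ⟨hvu, hau⟩
      refine ⟨⟨hau, ?_, ?_⟩, hvu⟩
      · rintro rfl
        exact srg_no_two_common G h hab hav hvu.symm hac hbc hvc
      · rintro rfl
        exact srg_no_two_common G h hac hav hvu.symm hab hbc.symm hvb
  rw [hkey, Set.toFinset_card, h.of_adj v a hav.symm]

/-- A vertex `v ∈ A` has exactly one neighbor in `B`. -/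
lemma srg_cross_set (h : G.IsSRGWith 19 6 1 2) {a b c v : V} {X : Finset V}
    (hX : ∀ u, u ∈ X ↔ G.Adj b u ∧ u ≠ a ∧ u ≠ c)
    (hab : G.Adj a b) (hac : G.Adj a c) (hbc : G.Adj b c)
    (hav : G.Adj a v) (hvb : v ≠ b) (hvc : v ≠ c) :
    (X.filter (fun u => G.Adj v u)).card = 1 := by
  have hnadj : ¬ G.Adj v b := fun hvb' =>
    srg_no_two_common G h hab hav hvb'.symm hac hbc hvc
  have hnadjc : ¬ G.Adj v c := fun hvc' =>
    srg_no_two_common G h hac hav hvc'.symm hab hbc.symm hvb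
  have h2 := h.of_not_adj hvb hnadj
  have hkey : (G.commonNeighbors v b).toFinset = insert a (X.filter (fun u => G.Adj v u)) := by
    ext u
    simp only [Set.mem_toFinset, SimpleGraph.mem_commonNeighbors, mem_insert, mem_filter, hX]
    constructor
    · rintro ⟨hvu, hbu⟩
      by_cases hua : u = a
      · exact Or.inl hua
      · refine Or.inr ⟨⟨hbu, hua, ?_⟩, hvu⟩
        rintro rfl
        exact hnadjc hvu
    · rintro (rfl | ⟨⟨hbu, _, _⟩, hvu⟩)
      · exact ⟨hav.symm, hab.symm⟩
      · exact ⟨hvu, hbu⟩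
  have hanotin : a ∉ X.filter (fun u => G.Adj v u) := by
    simp [hX]
  have := card_insert_of_notMem hanotin
  rw [← hkey, Set.toFinset_card, h2] at this
  omega

/-- `A` and `B` are disjoint. -/
lemma srg_disj (h : G.IsSRGWith 19 6 1 2) {a b c : V} {X Y : Finset V}
    (hX : ∀ u, u ∈ X ↔ G.Adj a u ∧ u ≠ b ∧ u ≠ c)
    (hY : ∀ u, u ∈ Y ↔ G.Adj b u ∧ u ≠ a ∧ u ≠ c)
    (hab : G.Adj a b) (hac : G.Adj a c) (hbc : G.Adj b c) :
    Disjoint X Y := by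
  rw [disjoint_left]
  intro u huX huY
  obtain ⟨hau, _, huc⟩ := (hX u).1 huX
  obtain ⟨hbu, _, _⟩ := (hY u).1 huY
  exact srg_no_two_common G h hab hau hbu hac hbc huc

end helpers

/-- For a triangle {a,b,c} in an srg(19,6,1,2), the induced subgraph on A ∪ B ∪ C is
3-regular: every vertex of A ∪ B ∪ C has exactly 3 neighbors inside A ∪ B ∪ C. -/
theorem srg_19_6_1_2_ABC_three_regular
    {V : Type} [Fintype V] [DecidableEq V] (G : SimpleGraph V) [DecidableRel G.Adj]
    (h : G.IsSRGWith 19 6 1 2) (a b c : V)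
    (hab : G.Adj a b) (hac : G.Adj a c) (hbc : G.Adj b c)
    (A B C : Finset V)
    (hA : A = Finset.univ.filter (fun v => G.Adj a v ∧ v ≠ b ∧ v ≠ c))
    (hB : B = Finset.univ.filter (fun v => G.Adj b v ∧ v ≠ a ∧ v ≠ c))
    (hC : C = Finset.univ.filter (fun v => G.Adj c v ∧ v ≠ a ∧ v ≠ b)) :
    ∀ v ∈ A ∪ B ∪ C, ((A ∪ B ∪ C).filter (fun u => G.Adj v u)).card = 3 := by
  have hAmem : ∀ u, u ∈ A ↔ G.Adj a u ∧ u ≠ b ∧ u ≠ c := by intro u; simp [hA]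
  have hBmem : ∀ u, u ∈ B ↔ G.Adj b u ∧ u ≠ a ∧ u ≠ c := by intro u; simp [hB]
  have hCmem : ∀ u, u ∈ C ↔ G.Adj c u ∧ u ≠ a ∧ u ≠ b := by intro u; simp [hC]
  have hAmem' : ∀ u, u ∈ A ↔ G.Adj a u ∧ u ≠ c ∧ u ≠ b := fun u => (hAmem u).trans (by tauto)
  have hBmem' : ∀ u, u ∈ B ↔ G.Adj b u ∧ u ≠ c ∧ u ≠ a := fun u => (hBmem u).trans (by tauto)
  have hCmem' : ∀ u, u ∈ C ↔ G.Adj c u ∧ u ≠ b ∧ u ≠ a := fun u => (hCmem u).trans (by tauto)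
  have hdAB : Disjoint A B := srg_disj G h hAmem hBmem hab hac hbc
  have hdAC : Disjoint A C := srg_disj G h hAmem' hCmem hac hab hbc.symm
  have hdBC : Disjoint B C := srg_disj G h hBmem' hCmem' hbc hab.symm hac.symm
  intro v hv
  have hsplit : ∀ w : V, ((A ∪ B ∪ C).filter (fun u => G.Adj w u)).card
      = (A.filter (fun u => G.Adj w u)).card + (B.filter (fun u => G.Adj w u)).card
        + (C.filter (fun u => G.Adj w u)).card := by
    intro w
    rw [filter_union, filter_union, card_union_of_disjoint, card_union_of_disjoint]
    · exact disjoint_filter_filter hdAB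
    · exact disjoint_union_left.2
        ⟨disjoint_filter_filter hdAC, disjoint_filter_filter hdBC⟩
  rw [hsplit]
  rcases mem_union.1 hv with hv' | hvC
  · rcases mem_union.1 hv' with hvA | hvB
    · obtain ⟨hav, hvb, hvc⟩ := (hAmem v).1 hvA
      rw [srg_same_set G h hAmem hab hac hbc hav hvb hvc,
          srg_cross_set G h hBmem hab hac hbc hav hvb hvc,
          srg_cross_set G h hCmem hac hab hbc.symm hav hvc hvb]
    · obtain ⟨hbv, hva, hvc⟩ := (hBmem v).1 hvB
      rw [srg_same_set G h hBmem hab.symm hbc hac hbv hva hvc,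
          srg_cross_set G h hAmem hab.symm hbc hac hbv hva hvc,
          srg_cross_set G h hCmem' hbc hab.symm hac.symm hbv hvc hva]
  · obtain ⟨hcv, hva, hvb⟩ := (hCmem v).1 hvC
    rw [srg_same_set G h hCmem hac.symm hbc.symm hab hcv hva hvb,
        srg_cross_set G h hAmem' hac.symm hbc.symm hab hcv hva hvb,
        srg_cross_set G h hBmem' hbc.symm hac.symm hab.symm hcv hvb hva]
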